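/- Let Z₁, …, Zₙ be centered, linearly independent (as elements of L²) jointly Gaussian random variables, and let g : ℝ → ℝ be a measurable function such that ∫_ℝ g(v) e^{-εv²} dv < ∞ for all ε > 0. Then ∫_{ℝⁿ} g(v₁) exp[-½ Var(Σⱼ vⱼ Zⱼ)] dv₁⋯dvₙ = (2π)^{(n-1)/2} / (det Cov(Z₁,…,Zₙ))^{1/2} · ∫_ℝ g(v/σ₁) e^{-v²/2} dv, where σ₁² = Var(Z₁ | Z₂, …, Zₙ). -/

import Mathlib

open MeasureTheory ProbabilityTheory Matrix

lemma quad_cons {m : ℕ} (A : Matrix (Fin (m+1)) (Fin (m+1)) ℝ) (hsym : Aᵀ = A)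
    (t : ℝ) (x : Fin m → ℝ) :
    (Fin.cons t x : Fin (m+1) → ℝ) ⬝ᵥ A *ᵥ (Fin.cons t x : Fin (m+1) → ℝ)
      = t^2 * A 0 0 + 2*t*(x ⬝ᵥ (fun j => A 0 j.succ))
        + x ⬝ᵥ (A.submatrix Fin.succ Fin.succ) *ᵥ x := by
  have hs : ∀ i j, A i j = A j i := fun i j => congrFun (congrFun hsym j) i
  simp only [dotProduct, mulVec, Fin.sum_univ_succ, Fin.cons_zero, Fin.cons_succ,
    submatrix_apply]
  simp only [mul_add, Finset.mul_sum, Finset.sum_add_distrib]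
  have h1 : (∑ j : Fin m, x j * (A j.succ 0 * t)) = ∑ j : Fin m, t * (A 0 j.succ * x j) :=
    Finset.sum_congr rfl fun j _ => by rw [hs j.succ 0]; ring
  rw [h1]
  ring_nf
  have h2 : (∑ j : Fin m, t * A 0 j.succ * x j) * 2 = ∑ j : Fin m, t * 2 * x j * A 0 j.succ := by
    rw [Finset.sum_mul]; exact Finset.sum_congr rfl fun j _ => by ring
  rw [h2]
  ring

lemma schur_bounds {m : ℕ} (A : Matrix (Fin (m+1)) (Fin (m+1)) ℝ) (hA : A.PosDef) :
    (∀ x : Fin m → ℝ,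
      A 0 0 - (fun j => A 0 j.succ) ⬝ᵥ ((A.submatrix Fin.succ Fin.succ)⁻¹ *ᵥ (fun j => A 0 j.succ))
        ≤ (Fin.cons 1 (-x) : Fin (m+1) → ℝ) ⬝ᵥ A *ᵥ (Fin.cons 1 (-x) : Fin (m+1) → ℝ))
    ∧ (∃ x : Fin m → ℝ, (Fin.cons 1 (-x) : Fin (m+1) → ℝ) ⬝ᵥ A *ᵥ (Fin.cons 1 (-x) : Fin (m+1) → ℝ)
        = A 0 0 - (fun j => A 0 j.succ) ⬝ᵥ
            ((A.submatrix Fin.succ Fin.succ)⁻¹ *ᵥ (fun j => A 0 j.succ))) := by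
  classical
  set b : Fin m → ℝ := fun j => A 0 j.succ with hb
  set D : Matrix (Fin m) (Fin m) ℝ := A.submatrix Fin.succ Fin.succ with hDdef
  have hsym : Aᵀ = A := by rw [← conjTranspose_eq_transpose_of_trivial]; exact hA.1
  have hstar : ∀ {k : ℕ} (x : Fin k → ℝ), star x = x := fun x => funext fun i => rfl
  have hD : D.PosDef := by
    refine Matrix.PosDef.of_dotProduct_mulVec_pos (hA.1.submatrix Fin.succ) fun x hx => ?_
    have hv : (Fin.cons 0 x : Fin (m+1) → ℝ) ≠ 0 := by
      intro h
      apply hx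
      ext j
      have := congrFun h j.succ
      simpa using this
    have h1 := hA.dotProduct_mulVec_pos hv
    rw [hstar, quad_cons A hsym 0 x] at h1
    rw [hstar]
    simpa using h1
  have hDsym : Dᵀ = D := by rw [← conjTranspose_eq_transpose_of_trivial]; exact hD.1
  have hDdet : IsUnit D.det := hD.det_pos.ne'.isUnit
  set c : Fin m → ℝ := D⁻¹ *ᵥ b with hc
  have hDc : D *ᵥ c = b := by rw [hc, mulVec_mulVec, Matrix.mul_nonsing_inv _ hDdet, one_mulVec]
  have hφ : ∀ x : Fin m → ℝ,
      (Fin.cons 1 (-x) : Fin (m+1) → ℝ) ⬝ᵥ A *ᵥ (Fin.cons 1 (-x) : Fin (m+1) → ℝ)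
        = (A 0 0 - b ⬝ᵥ c) + (x - c) ⬝ᵥ D *ᵥ (x - c) := by
    intro x
    rw [quad_cons A hsym 1 (-x)]
    rw [← hb, ← hDdef]
    have e1 : (x - c) ⬝ᵥ D *ᵥ (x - c)
        = x ⬝ᵥ D *ᵥ x - x ⬝ᵥ D *ᵥ c - c ⬝ᵥ D *ᵥ x + c ⬝ᵥ D *ᵥ c := by
      rw [mulVec_sub, dotProduct_sub, sub_dotProduct, sub_dotProduct]
      ring
    have e2 : x ⬝ᵥ D *ᵥ c = x ⬝ᵥ b := by rw [hDc]
    have e3 : c ⬝ᵥ D *ᵥ x = x ⬝ᵥ b := by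
      rw [dotProduct_mulVec, ← mulVec_transpose, hDsym, hDc, dotProduct_comm]
    have e4 : c ⬝ᵥ D *ᵥ c = c ⬝ᵥ b := by rw [hDc]
    have e5 : (-x) ⬝ᵥ b = -(x ⬝ᵥ b) := neg_dotProduct x b
    have e6 : (-x) ⬝ᵥ D *ᵥ (-x) = x ⬝ᵥ D *ᵥ x := by
      rw [neg_dotProduct, mulVec_neg, dotProduct_neg, neg_neg]
    have e7 : b ⬝ᵥ c = c ⬝ᵥ b := dotProduct_comm b c
    rw [e1, e2, e3, e4, e5, e6, e7]
    ring
  constructor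
  · intro x
    rw [hφ x]
    have hnn : 0 ≤ (x - c) ⬝ᵥ D *ᵥ (x - c) := by
      have := hD.posSemidef.dotProduct_mulVec_nonneg (x - c)
      rwa [hstar] at this
    linarith
  · refine ⟨c, ?_⟩
    rw [hφ c]
    simp

open scoped MatrixOrder in
theorem gauss_aux {m : ℕ} (A : Matrix (Fin (m+1)) (Fin (m+1)) ℝ) (hA : A.PosDef)
    (g : ℝ → ℝ) (hg : Measurable g) :
    (∫ v : Fin (m+1) → ℝ, g (v 0) * Real.exp (-(1/2) * (v ⬝ᵥ A *ᵥ v)))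
      = (2*Real.pi)^((m:ℝ)/2) / Real.sqrt A.det *
        ∫ v : ℝ, g (v / Real.sqrt (A 0 0 - (fun j => A 0 j.succ) ⬝ᵥ
            ((A.submatrix Fin.succ Fin.succ)⁻¹ *ᵥ (fun j => A 0 j.succ)))) *
          Real.exp (-v^2/2) := by
  classical
  set b : Fin m → ℝ := fun j => A 0 j.succ with hb
  set D : Matrix (Fin m) (Fin m) ℝ := A.submatrix Fin.succ Fin.succ with hDdef
  have hsym : Aᵀ = A := by rw [← conjTranspose_eq_transpose_of_trivial]; exact hA.1
  have hsym' : ∀ i j, A i j = A j i := fun i j => congrFun (congrFun hsym j) i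
  have hstar : ∀ {k : ℕ} (x : Fin k → ℝ), star x = x := fun x => funext fun i => rfl
  have hD : D.PosDef := by
    refine Matrix.PosDef.of_dotProduct_mulVec_pos (hA.1.submatrix Fin.succ) fun x hx => ?_
    have hv : (Fin.cons 0 x : Fin (m+1) → ℝ) ≠ 0 := by
      intro h
      apply hx
      ext j
      have := congrFun h j.succ
      simpa using this
    have h1 := hA.dotProduct_mulVec_pos hv
    rw [hstar, quad_cons A hsym 0 x] at h1
    rw [hstar]
    simpa using h1
  have hDsym : Dᵀ = D := by rw [← conjTranspose_eq_transpose_of_trivial]; exact hD.1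
  have hDdet : IsUnit D.det := hD.det_pos.ne'.isUnit
  set S : Matrix (Fin m) (Fin m) ℝ := CFC.sqrt D with hSdef
  have hSS : S * S = D := CFC.sqrt_mul_sqrt_self D (Matrix.nonneg_iff_posSemidef.2 hD.posSemidef)
  have hSsym : Sᵀ = S := by
    rw [← conjTranspose_eq_transpose_of_trivial]; exact (Matrix.nonneg_iff_posSemidef.1 (CFC.sqrt_nonneg D)).1
  have hSdet : IsUnit S.det := by
    have h : S.det * S.det = D.det := by rw [← det_mul, hSS]
    exact isUnit_of_mul_isUnit_left (h ▸ hDdet)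
  have hDinv : D⁻¹ = S⁻¹ * S⁻¹ := by rw [← hSS, Matrix.mul_inv_rev]
  set s : ℝ := A 0 0 - b ⬝ᵥ (D⁻¹ *ᵥ b) with hs_def
  set c : Fin m → ℝ := D⁻¹ *ᵥ b with hc
  have hDc : D *ᵥ c = b := by rw [hc, mulVec_mulVec, Matrix.mul_nonsing_inv _ hDdet, one_mulVec]
  have hs_pos : 0 < s := by
    have hw : (Fin.cons 1 (-c) : Fin (m+1) → ℝ) ≠ 0 := by
      intro h
      have := congrFun h 0
      simp at this
    have h1 := hA.dotProduct_mulVec_pos hw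
    rw [hstar, quad_cons A hsym 1 (-c)] at h1
    simp only [neg_dotProduct, dotProduct_neg, mulVec_neg, neg_neg] at h1
    rw [← hDdef, ← hb, hDc] at h1
    have hcb : c ⬝ᵥ b = b ⬝ᵥ c := dotProduct_comm _ _
    rw [hs_def]
    nlinarith [h1]
  set ρ : ℝ := Real.sqrt s with hρ
  have hρ_pos : 0 < ρ := Real.sqrt_pos.2 hs_pos
  have hρ_sq : ρ * ρ = s := Real.mul_self_sqrt hs_pos.le
  set y : Fin m → ℝ := S⁻¹ *ᵥ b with hy
  have hSy : S *ᵥ y = b := by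
    rw [hy, mulVec_mulVec, Matrix.mul_nonsing_inv _ hSdet, one_mulVec]
  have hSinv_sym : S⁻¹ᵀ = S⁻¹ := by rw [Matrix.transpose_nonsing_inv, hSsym]
  have hyy : y ⬝ᵥ y = b ⬝ᵥ c := by
    rw [hy, hc, hDinv]
    rw [dotProduct_mulVec, vecMul_mulVec, ← dotProduct_mulVec, hSinv_sym]
  set R : Matrix (Fin (m+1)) (Fin (m+1)) ℝ :=
    Matrix.of (Fin.cons (Fin.cons ρ y) (fun i => Fin.cons 0 (S i))) with hR
  have hR00 : R 0 0 = ρ := rfl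
  have hR0s : ∀ j : Fin m, R 0 j.succ = y j := fun j => rfl
  have hRs0 : ∀ i : Fin m, R i.succ 0 = 0 := fun i => rfl
  have hRss : ∀ i j : Fin m, R i.succ j.succ = S i j := fun i j => rfl
  have hRfac : R * Rᵀ = A := by
    ext i j
    rw [mul_apply]
    refine Fin.cases ?_ (fun i' => ?_) i <;> refine Fin.cases ?_ (fun j' => ?_) j
    · rw [Fin.sum_univ_succ]
      simp only [transpose_apply, hR00, hR0s]
      have : ∑ k : Fin m, y k * y k = y ⬝ᵥ y := rfl
      rw [this, hyy, hρ_sq, hs_def]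
      ring
    · rw [Fin.sum_univ_succ]
      simp only [transpose_apply, hR00, hR0s, hRs0, hRss, mul_zero, zero_add]
      have : ∑ k : Fin m, y k * S j' k = S j' ⬝ᵥ y := by
        rw [dotProduct]; exact Finset.sum_congr rfl fun k _ => mul_comm _ _
      rw [this]
      have h2 : S j' ⬝ᵥ y = (S *ᵥ y) j' := rfl
      rw [h2, hSy]
    · rw [Fin.sum_univ_succ]
      simp only [transpose_apply, hR00, hR0s, hRs0, hRss, zero_mul, zero_add]
      have : ∑ k : Fin m, S i' k * y k = (S *ᵥ y) i' := rfl
      rw [this, hSy, hsym' i'.succ 0]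
    · rw [Fin.sum_univ_succ]
      simp only [transpose_apply, hRs0, hRss, zero_mul, zero_add]
      have : ∑ k : Fin m, S i' k * S j' k = (S * Sᵀ) i' j' := by
        rw [mul_apply]
        exact Finset.sum_congr rfl fun k _ => by rw [transpose_apply]
      rw [this, hSsym, hSS]
      rfl
  have hRsub : R.submatrix Fin.succ Fin.succ = S := by
    ext i j; exact hRss i j
  have hRdet : R.det = ρ * S.det := by
    rw [det_succ_column_zero, Fin.sum_univ_succ]
    simp only [hRs0, hR00, Fin.succAbove_zero, mul_zero, zero_mul, Finset.sum_const_zero,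
      add_zero, Fin.val_zero, pow_zero, one_mul, hRsub]
  have hRdet_ne : R.det ≠ 0 := by
    rw [hRdet]
    exact mul_ne_zero hρ_pos.ne' hSdet.ne_zero
  have h1 : R *ᵥ Pi.single 0 ρ⁻¹ = Pi.single 0 1 := by
    ext i
    rw [mulVec_single]
    refine Fin.cases ?_ (fun i' => ?_) i
    · simp [hR00, hρ_pos.ne']
    · simp [hRs0, Fin.succ_ne_zero]
  have hRinv_single : R⁻¹ *ᵥ Pi.single 0 1 = Pi.single 0 ρ⁻¹ := by
    rw [← h1, mulVec_mulVec, Matrix.nonsing_inv_mul _ hRdet_ne.isUnit, one_mulVec]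
  have hRinv_col : ∀ j, R⁻¹ j 0 = if j = 0 then ρ⁻¹ else 0 := by
    intro j
    have := congrFun hRinv_single j
    simp only [mulVec_single_one, col_apply] at this
    rw [this, Pi.single_apply]
  -- the linear change of variables
  set M : Matrix (Fin (m+1)) (Fin (m+1)) ℝ := (Rᵀ)⁻¹ with hM
  have hMt : Mᵀ = R⁻¹ := by rw [hM, ← transpose_nonsing_inv, transpose_transpose]
  have hMdet : M.det = (R.det)⁻¹ := by
    rw [hM, det_nonsing_inv, det_transpose, Ring.inverse_eq_inv]
  have hMdet_ne : M.det ≠ 0 := by rw [hMdet]; exact inv_ne_zero hRdet_ne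
  have hRtdet : IsUnit Rᵀ.det := by rw [det_transpose]; exact hRdet_ne.isUnit
  have hMAM : Mᵀ * A * M = 1 := by
    have h2 : R⁻¹ * (R * Rᵀ) = Rᵀ := by
      rw [← Matrix.mul_assoc, Matrix.nonsing_inv_mul _ hRdet_ne.isUnit, Matrix.one_mul]
    rw [hMt, hM, ← hRfac, h2, Matrix.mul_nonsing_inv _ hRtdet]
  have hM0 : ∀ x : Fin (m+1) → ℝ, (M *ᵥ x) 0 = ρ⁻¹ * x 0 := by
    intro x
    have hMrow : ∀ j, M 0 j = if j = 0 then ρ⁻¹ else 0 := by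
      intro j
      have hMT : M = (R⁻¹)ᵀ := by rw [hM, ← transpose_nonsing_inv]
      rw [hMT, transpose_apply]
      exact hRinv_col j
    show (fun i => (fun j => M i j) ⬝ᵥ x) 0 = ρ⁻¹ * x 0
    simp only [dotProduct, hMrow, ite_mul, zero_mul]
    rw [Finset.sum_ite_eq' Finset.univ 0 (fun j => ρ⁻¹ * x j)]
    simp
  have hquad : ∀ x : Fin (m+1) → ℝ, (M *ᵥ x) ⬝ᵥ A *ᵥ (M *ᵥ x) = ∑ i, x i * x i := by
    intro x
    rw [mulVec_mulVec, dotProduct_mulVec, vecMul_mulVec, ← dotProduct_mulVec,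
      ← Matrix.mul_assoc, hMAM, one_mulVec]
    rfl
  -- measurability
  have hQmeas : Measurable fun v : Fin (m+1) → ℝ => v ⬝ᵥ A *ᵥ v := by
    have h : (fun v : Fin (m+1) → ℝ => v ⬝ᵥ A *ᵥ v)
        = fun v => ∑ i, ∑ j, v i * (A i j * v j) := by
      funext v; simp [dotProduct, mulVec, Finset.mul_sum]
    rw [h]
    exact Finset.measurable_sum _ fun i _ => Finset.measurable_sum _ fun j _ =>
      (measurable_pi_apply i).mul ((measurable_pi_apply j).const_mul _)
  have hFmeas : Measurable fun v : Fin (m+1) → ℝ =>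
      g (v 0) * Real.exp (-(1/2) * (v ⬝ᵥ A *ᵥ v)) :=
    (hg.comp (measurable_pi_apply 0)).mul
      (Real.measurable_exp.comp (hQmeas.const_mul _))
  have hTmeas : Measurable fun x : Fin (m+1) → ℝ => M *ᵥ x := by
    apply measurable_pi_lambda
    intro i
    show Measurable fun x : Fin (m+1) → ℝ => ∑ j, M i j * x j
    exact Finset.measurable_sum _ fun j _ => (measurable_pi_apply j).const_mul _
  -- change of variables
  have hmap := Real.map_matrix_volume_pi_eq_smul_volume_pi (M := M) hMdet_ne
  have hcov : ∫ x : Fin (m+1) → ℝ,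
        g ((M *ᵥ x) 0) * Real.exp (-(1/2) * ((M *ᵥ x) ⬝ᵥ A *ᵥ (M *ᵥ x)))
      = |M.det|⁻¹ * ∫ v : Fin (m+1) → ℝ, g (v 0) * Real.exp (-(1/2) * (v ⬝ᵥ A *ᵥ v)) := by
    have htl : ⇑(Matrix.toLin' M) = fun x => M *ᵥ x := by
      funext x; exact Matrix.toLin'_apply M x
    have hφ : AEMeasurable (⇑(Matrix.toLin' M)) (volume : Measure (Fin (m+1) → ℝ)) := by
      rw [htl]; exact hTmeas.aemeasurable
    have h1 := integral_map (μ := (volume : Measure (Fin (m+1) → ℝ)))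
      (f := fun v : Fin (m+1) → ℝ => g (v 0) * Real.exp (-(1/2) * (v ⬝ᵥ A *ᵥ v)))
      hφ hFmeas.aestronglyMeasurable
    rw [hmap, integral_smul_measure, ENNReal.toReal_ofReal (abs_nonneg _), abs_inv] at h1
    simp only [htl] at h1
    exact h1.symm
  have hdetA : A.det = R.det ^ 2 := by rw [← hRfac, det_mul, det_transpose, sq]
  have hsqrtA : Real.sqrt A.det = |R.det| := by rw [hdetA, Real.sqrt_sq_eq_abs]
  have hg1 : ∫ t : ℝ, Real.exp (-(1/2) * (t*t)) = Real.sqrt (2*Real.pi) := by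
    have h := integral_gaussian (1/2 : ℝ)
    have he : (fun t : ℝ => Real.exp (-(1/2) * (t*t)))
        = fun t : ℝ => Real.exp (-(1/2 : ℝ) * t^2) := by
      funext t; rw [← pow_two]
    rw [he]
    rw [h]
    congr 1
    ring
  set F0 : ℝ → ℝ := fun t => g (ρ⁻¹ * t) * Real.exp (-(1/2)*(t*t)) with hF0
  set G : ℝ → ℝ := fun t => Real.exp (-(1/2)*(t*t)) with hGdef
  have hprod : ∫ x : Fin (m+1) → ℝ, g (ρ⁻¹ * x 0) * Real.exp (-(1/2) * ∑ i, x i * x i)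
      = (∫ t, F0 t) * (Real.sqrt (2*Real.pi))^m := by
    have hfac : (fun x : Fin (m+1) → ℝ => g (ρ⁻¹ * x 0) * Real.exp (-(1/2) * ∑ i, x i * x i))
        = fun x => ∏ i, (Fin.cons F0 (fun _ => G) : Fin (m+1) → ℝ → ℝ) i (x i) := by
      funext x
      rw [Fin.prod_univ_succ]
      simp only [Fin.cons_zero, Fin.cons_succ]
      have hsplit : -(1/2:ℝ) * ∑ i, x i * x i
          = -(1/2:ℝ)*(x 0 * x 0) + ∑ i : Fin m, -(1/2:ℝ)*(x i.succ * x i.succ) := by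
        rw [Fin.sum_univ_succ, mul_add, Finset.mul_sum]
      rw [hsplit, Real.exp_add, Real.exp_sum, hF0, hGdef]
      ring
    rw [hfac, integral_fintype_prod_volume_eq_prod (ι := Fin (m+1))
      (f := (Fin.cons F0 (fun _ => G) : Fin (m+1) → ℝ → ℝ))]
    rw [Fin.prod_univ_succ]
    simp only [Fin.cons_zero, Fin.cons_succ]
    rw [Finset.prod_const, Finset.card_univ, Fintype.card_fin]
    rw [show ∫ t, G t = Real.sqrt (2*Real.pi) from hg1]
  have hpow : (Real.sqrt (2*Real.pi))^m = (2*Real.pi)^((m:ℝ)/2) := by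
    rw [Real.sqrt_eq_rpow, ← Real.rpow_natCast ((2*Real.pi) ^ ((1:ℝ)/2)) m,
      ← Real.rpow_mul (by positivity)]
    congr 1
    ring
  have hint_eq : ∫ t, F0 t = ∫ v : ℝ, g (v / ρ) * Real.exp (-v^2/2) := by
    have : F0 = fun v => g (v / ρ) * Real.exp (-v^2/2) := by
      funext t
      simp only [hF0]
      rw [show ρ⁻¹ * t = t / ρ by rw [inv_mul_eq_div],
        show -(1/2:ℝ)*(t*t) = -t^2/2 by ring]
    rw [this]
  simp only [hM0, hquad] at hcov
  rw [hprod] at hcov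
  have habs : |M.det|⁻¹ = |R.det| := by rw [hMdet, abs_inv, inv_inv]
  rw [habs] at hcov
  have hne : |R.det| ≠ 0 := abs_ne_zero.2 hRdet_ne
  rw [hsqrtA, ← hpow, ← hint_eq]
  rw [div_mul_eq_mul_div, mul_comm]
  rw [eq_div_iff hne, mul_comm]
  exact hcov.symm

theorem stmt_11 {Ω : Type*} [MeasurableSpace Ω] (μ : Measure Ω) [IsProbabilityMeasure μ]
    (n : ℕ) (hn : 1 ≤ n) (Z : Fin n → Ω → ℝ)
    (hmeas : ∀ i, Measurable (Z i))
    (hL2 : ∀ i, MemLp (Z i) 2 μ)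
    (hcent : ∀ i, ∫ ω, Z i ω ∂μ = 0)
    (hgauss : ∀ a : Fin n → ℝ, ∃ v : NNReal,
      Measure.map (fun ω => ∑ i, a i * Z i ω) μ = gaussianReal 0 v)
    (hli : ∀ a : Fin n → ℝ, (∀ᵐ ω ∂μ, ∑ i, a i * Z i ω = 0) → a = 0)
    (g : ℝ → ℝ) (hg : Measurable g)
    (hint : ∀ ε : ℝ, 0 < ε → Integrable (fun v : ℝ => g v * Real.exp (-(ε * v ^ 2)))) :
    (∫ v : Fin n → ℝ, g (v ⟨0, hn⟩) *
        Real.exp (-(1 / 2) * ∑ i, ∑ j, v i * v j * ∫ ω, Z i ω * Z j ω ∂μ))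
      = (2 * Real.pi) ^ (((n : ℝ) - 1) / 2)
          / Real.sqrt (Matrix.of fun i j => ∫ ω, Z i ω * Z j ω ∂μ).det
        * ∫ v : ℝ,
            g (v / Real.sqrt (⨅ a : Fin n → ℝ,
                ∫ ω, (Z ⟨0, hn⟩ ω
                  - ∑ j ∈ Finset.univ.erase ⟨0, hn⟩, a j * Z j ω) ^ 2 ∂μ))
              * Real.exp (-v ^ 2 / 2) := by
  classical
  obtain ⟨m, rfl⟩ : ∃ m, n = m + 1 := ⟨n - 1, (Nat.succ_pred_eq_of_pos hn).symm⟩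
  have h0 : (⟨0, hn⟩ : Fin (m+1)) = 0 := rfl
  rw [h0]
  set A : Matrix (Fin (m+1)) (Fin (m+1)) ℝ := Matrix.of fun i j => ∫ ω, Z i ω * Z j ω ∂μ
    with hAdef
  have hAapp : ∀ i j, A i j = ∫ ω, Z i ω * Z j ω ∂μ := fun i j => rfl
  -- integrability of products
  have hZint : ∀ i j, Integrable (fun ω => Z i ω * Z j ω) μ := by
    intro i j
    refine Integrable.mono' (((hL2 i).integrable_sq.add (hL2 j).integrable_sq).const_mul (1/2))
      ((hmeas i).mul (hmeas j)).aestronglyMeasurable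
      (Filter.Eventually.of_forall fun ω => ?_)
    rw [Real.norm_eq_abs, abs_mul]
    simp only [Pi.add_apply]
    nlinarith [sq_nonneg (|Z i ω| - |Z j ω|), abs_nonneg (Z i ω), abs_nonneg (Z j ω),
      sq_abs (Z i ω), sq_abs (Z j ω), abs_nonneg (Z i ω * Z j ω)]
  -- covariance expansion
  have hsum_sq : ∀ (w : Fin (m+1) → ℝ) (ω : Ω),
      (∑ i, w i * Z i ω)^2 = ∑ i, ∑ j, (w i * w j) * (Z i ω * Z j ω) := by
    intro w ω
    rw [sq, Finset.sum_mul_sum]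
    exact Finset.sum_congr rfl fun i _ => Finset.sum_congr rfl fun j _ => by ring
  have hCOV : ∀ w : Fin (m+1) → ℝ,
      ∫ ω, (∑ i, w i * Z i ω)^2 ∂μ = w ⬝ᵥ A *ᵥ w := by
    intro w
    have h1 : ∫ ω, (∑ i, w i * Z i ω)^2 ∂μ
        = ∫ ω, ∑ i, ∑ j, (w i * w j) * (Z i ω * Z j ω) ∂μ := by
      congr 1; funext ω; exact hsum_sq w ω
    have h2 : w ⬝ᵥ A *ᵥ w = ∑ i, ∑ j, w i * w j * (A i j) := by
      simp only [dotProduct, mulVec, Finset.mul_sum]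
      exact Finset.sum_congr rfl fun i _ => Finset.sum_congr rfl fun j _ => by ring
    rw [h1, h2,
      integral_finset_sum _ (fun i _ => integrable_finset_sum _ fun j _ => (hZint i j).const_mul _)]
    refine Finset.sum_congr rfl fun i _ => ?_
    rw [integral_finset_sum _ (fun j _ => (hZint i j).const_mul _)]
    refine Finset.sum_congr rfl fun j _ => ?_
    rw [integral_const_mul, hAapp]
  have hsq_int : ∀ w : Fin (m+1) → ℝ, Integrable (fun ω => (∑ i, w i * Z i ω)^2) μ := by
    intro w
    have hbase : Integrable (fun ω => ∑ i, ∑ j, (w i * w j) * (Z i ω * Z j ω)) μ :=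
      integrable_finset_sum _ fun i _ =>
        integrable_finset_sum _ fun j _ => (hZint i j).const_mul _
    exact hbase.congr (Filter.Eventually.of_forall fun ω => (hsum_sq w ω).symm)
  -- positive definiteness
  have hPD : A.PosDef := by
    refine Matrix.PosDef.of_dotProduct_mulVec_pos ?_ ?_
    · ext i j
      show star (A j i) = A i j
      rw [star_trivial, hAapp, hAapp]
      congr 1; funext ω; ring
    · intro x hx
      have hst : star x = x := funext fun i => rfl
      rw [hst, ← hCOV x]
      have hnn : 0 ≤ ∫ ω, (∑ i, x i * Z i ω)^2 ∂μ := integral_nonneg fun ω => sq_nonneg _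
      rcases hnn.lt_or_eq with hlt | heq
      · exact hlt
      · exfalso
        apply hx
        apply hli
        have hz := (integral_eq_zero_iff_of_nonneg (fun ω => sq_nonneg _) (hsq_int x)).1 heq.symm
        filter_upwards [hz] with ω hω
        exact pow_eq_zero_iff (by norm_num) |>.1 hω
  -- the infimum equals the Schur complement
  set s : ℝ := A 0 0 - (fun j => A 0 j.succ) ⬝ᵥ
      ((A.submatrix Fin.succ Fin.succ)⁻¹ *ᵥ (fun j => A 0 j.succ)) with hs_def
  obtain ⟨hlow, x₀, hx₀⟩ := schur_bounds A hPD
  have hrw : ∀ a : Fin (m+1) → ℝ,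
      (∫ ω, (Z 0 ω - ∑ j ∈ Finset.univ.erase 0, a j * Z j ω)^2 ∂μ)
        = (Fin.cons 1 (-(fun j => a j.succ)) : Fin (m+1) → ℝ) ⬝ᵥ A *ᵥ
            (Fin.cons 1 (-(fun j => a j.succ)) : Fin (m+1) → ℝ) := by
    intro a
    rw [← hCOV]
    congr 1
    funext ω
    congr 1
    have he : ∑ j ∈ Finset.univ.erase 0, a j * Z j ω
        = ∑ j : Fin m, a j.succ * Z j.succ ω := by
      have h1 : ∑ j : Fin (m+1), a j * Z j ω
          = a 0 * Z 0 ω + ∑ j : Fin m, a j.succ * Z j.succ ω := Fin.sum_univ_succ _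
      have h2 : ∑ j : Fin (m+1), a j * Z j ω
          = a 0 * Z 0 ω + ∑ j ∈ Finset.univ.erase 0, a j * Z j ω :=
        (Finset.add_sum_erase _ (fun j => a j * Z j ω) (Finset.mem_univ 0)).symm
      linarith [h1, h2]
    rw [he, Fin.sum_univ_succ]
    simp only [Fin.cons_zero, Fin.cons_succ, Pi.neg_apply, one_mul, neg_mul]
    rw [sub_eq_add_neg, ← Finset.sum_neg_distrib]
  have hinf : (⨅ a : Fin (m+1) → ℝ,
      ∫ ω, (Z 0 ω - ∑ j ∈ Finset.univ.erase 0, a j * Z j ω)^2 ∂μ) = s := by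
    apply le_antisymm
    · have : (∫ ω, (Z 0 ω - ∑ j ∈ Finset.univ.erase 0,
          (Fin.cons 0 x₀ : Fin (m+1) → ℝ) j * Z j ω)^2 ∂μ) = s := by
        rw [hrw]
        have : (fun j : Fin m => (Fin.cons 0 x₀ : Fin (m+1) → ℝ) j.succ) = x₀ := by
          funext j; exact Fin.cons_succ _ _ _
        rw [this]
        exact hx₀
      calc (⨅ a : Fin (m+1) → ℝ, ∫ ω, (Z 0 ω - ∑ j ∈ Finset.univ.erase 0, a j * Z j ω)^2 ∂μ)
          ≤ _ := ciInf_le ⟨s, by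
              rintro r ⟨a, rfl⟩
              have hh := hlow (fun j => a j.succ)
              rw [← hrw a] at hh
              exact hh⟩ (Fin.cons 0 x₀)
        _ = s := this
    · refine le_ciInf fun a => ?_
      have hh := hlow (fun j => a j.succ)
      rw [← hrw a] at hh
      exact hh
  rw [hinf]
  -- apply the Gaussian integral lemma
  have hmain := gauss_aux A hPD g hg
  have hq : ∀ v : Fin (m+1) → ℝ,
      (-(1/2 : ℝ)) * ∑ i, ∑ j, v i * v j * ∫ ω, Z i ω * Z j ω ∂μ
        = -(1/2 : ℝ) * (v ⬝ᵥ A *ᵥ v) := by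
    intro v
    congr 1
    simp only [dotProduct, mulVec, Finset.mul_sum]
    exact Finset.sum_congr rfl fun i _ => Finset.sum_congr rfl fun j _ => by
      rw [hAapp]; ring
  simp_rw [hq]
  rw [hmain]
  have hcast : ((m:ℝ)+1) - 1 = (m:ℝ) := by ring
  push_cast
  rw [hcast]
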